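/- For λ ∈ ℂ, λ ≠ 0, the triple (ê₁, ê₂, ê_q)(ω) = (−(iλ/2)cos[(iλ−2)ω], sin(iλω) + (iλ/2)sin[(iλ−2)ω], −2iλ cos[(iλ−1)ω]) satisfies the parameter-dependent ODE system: −ê₁'' − (iλ)²ê₁ + (iλ−1)ê_q cos ω − ê_q' sin ω = 0, −ê₂'' − (iλ)²ê₂ + (iλ−1)ê_q sin ω + ê_q' cos ω = 0, and (iλ)ê₁ cos ω − ê₁' sin ω + (iλ)ê₂ sin ω + ê₂' cos ω = 0, for all ω ∈ (0, π/2). -/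

import Mathlib

open Complex

/-- First component of the third fundamental solution. -/
noncomputable def fe1 (l : ℂ) (ω : ℝ) : ℂ :=
  -(I * l / 2) * Complex.cos ((I * l - 2) * (ω : ℂ))

/-- Second component of the third fundamental solution. -/
noncomputable def fe2 (l : ℂ) (ω : ℝ) : ℂ :=
  Complex.sin (I * l * (ω : ℂ)) + (I * l / 2) * Complex.sin ((I * l - 2) * (ω : ℂ))

/-- Pressure component of the third fundamental solution. -/
noncomputable def feq (l : ℂ) (ω : ℝ) : ℂ :=
  -2 * I * l * Complex.cos ((I * l - 1) * (ω : ℂ))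

lemma hd_cos (c : ℂ) (ω : ℝ) :
    HasDerivAt (fun ω : ℝ => Complex.cos (c * ω)) (-c * Complex.sin (c * ω)) ω := by
  have h : HasDerivAt (fun z : ℂ => Complex.cos (c * z)) (-c * Complex.sin (c * ω)) (ω : ℂ) := by
    have h' := ((Complex.hasDerivAt_cos (c * ω)).comp (ω:ℂ)
      ((hasDerivAt_id (ω:ℂ)).const_mul c))
    convert h' using 1 <;> first | rfl | ring
  exact h.comp_ofReal

lemma hd_sin (c : ℂ) (ω : ℝ) :
    HasDerivAt (fun ω : ℝ => Complex.sin (c * ω)) (c * Complex.cos (c * ω)) ω := by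
  have h : HasDerivAt (fun z : ℂ => Complex.sin (c * z)) (c * Complex.cos (c * ω)) (ω : ℂ) := by
    have h' := ((Complex.hasDerivAt_sin (c * ω)).comp (ω:ℂ)
      ((hasDerivAt_id (ω:ℂ)).const_mul c))
    convert h' using 1 <;> first | rfl | ring
  exact h.comp_ofReal

section
variable (l : ℂ)

lemma hd_fe1 (x : ℝ) :
    HasDerivAt (fe1 l) ((I*l/2)*(I*l-2) * Complex.sin ((I*l-2)*x)) x := by
  have h := (hd_cos (I*l-2) x).const_mul (-(I*l/2))
  have e : -(I*l/2) * (-(I*l-2) * Complex.sin ((I*l-2)*x))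
      = (I*l/2)*(I*l-2) * Complex.sin ((I*l-2)*x) := by ring
  rw [e] at h; exact h

lemma hd_fe2 (x : ℝ) :
    HasDerivAt (fe2 l) (I*l * Complex.cos (I*l*x)
      + (I*l/2)*(I*l-2) * Complex.cos ((I*l-2)*x)) x := by
  have h := (hd_sin (I*l) x).add ((hd_sin (I*l-2) x).const_mul (I*l/2))
  have e : I*l * Complex.cos (I*l*x) + (I*l/2) * ((I*l-2) * Complex.cos ((I*l-2)*x))
      = I*l * Complex.cos (I*l*x) + (I*l/2)*(I*l-2) * Complex.cos ((I*l-2)*x) := by ring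
  rw [e] at h; exact h

lemma hd_feq (x : ℝ) :
    HasDerivAt (feq l) (2*(I*l)*(I*l-1) * Complex.sin ((I*l-1)*x)) x := by
  have h := (hd_cos (I*l-1) x).const_mul (-2*I*l)
  have e : -2*I*l * (-(I*l-1) * Complex.sin ((I*l-1)*x))
      = 2*(I*l)*(I*l-1) * Complex.sin ((I*l-1)*x) := by ring
  rw [e] at h; exact h

lemma deriv_fe1 : deriv (fe1 l) = fun x : ℝ => (I*l/2)*(I*l-2) * Complex.sin ((I*l-2)*x) :=
  funext fun x => (hd_fe1 l x).deriv

lemma deriv_fe2 : deriv (fe2 l) = fun x : ℝ => I*l * Complex.cos (I*l*x)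
    + (I*l/2)*(I*l-2) * Complex.cos ((I*l-2)*x) :=
  funext fun x => (hd_fe2 l x).deriv

lemma hd_fe1' (x : ℝ) :
    HasDerivAt (deriv (fe1 l)) ((I*l/2)*(I*l-2)^2 * Complex.cos ((I*l-2)*x)) x := by
  rw [deriv_fe1]
  have h := (hd_sin (I*l-2) x).const_mul ((I*l/2)*(I*l-2))
  have e : (I*l/2)*(I*l-2) * ((I*l-2) * Complex.cos ((I*l-2)*x))
      = (I*l/2)*(I*l-2)^2 * Complex.cos ((I*l-2)*x) := by ring
  rw [e] at h; exact h

lemma hd_fe2' (x : ℝ) :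
    HasDerivAt (deriv (fe2 l)) (-(I*l)^2 * Complex.sin (I*l*x)
      - (I*l/2)*(I*l-2)^2 * Complex.sin ((I*l-2)*x)) x := by
  rw [deriv_fe2]
  have h := ((hd_cos (I*l) x).const_mul (I*l)).add
    ((hd_cos (I*l-2) x).const_mul ((I*l/2)*(I*l-2)))
  have e : I*l * (-(I*l) * Complex.sin (I*l*x))
      + (I*l/2)*(I*l-2) * (-(I*l-2) * Complex.sin ((I*l-2)*x))
      = -(I*l)^2 * Complex.sin (I*l*x) - (I*l/2)*(I*l-2)^2 * Complex.sin ((I*l-2)*x) := by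
    ring
  rw [e] at h; exact h

end

/-- The triple (ê₁, ê₂, ê_q) solves the homogeneous Fourier-transformed Stokes model
    system on (0, π/2) for every λ ≠ 0. -/
theorem fundamental_solution_solves_model_problem
    (l : ℂ) (hl : l ≠ 0) :
    ∀ ω ∈ Set.Ioo (0 : ℝ) (Real.pi / 2),
      (-(deriv (deriv (fe1 l)) ω) - (I * l) ^ 2 * fe1 l ω
          + (I * l - 1) * feq l ω * (Real.cos ω : ℂ)
          - deriv (feq l) ω * (Real.sin ω : ℂ) = 0) ∧
      (-(deriv (deriv (fe2 l)) ω) - (I * l) ^ 2 * fe2 l ω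
          + (I * l - 1) * feq l ω * (Real.sin ω : ℂ)
          + deriv (feq l) ω * (Real.cos ω : ℂ) = 0) ∧
      ((I * l) * fe1 l ω * (Real.cos ω : ℂ) - deriv (fe1 l) ω * (Real.sin ω : ℂ)
          + (I * l) * fe2 l ω * (Real.sin ω : ℂ)
          + deriv (fe2 l) ω * (Real.cos ω : ℂ) = 0) := by
  intro ω _
  rw [(hd_fe1' l ω).deriv, (hd_fe2' l ω).deriv, (hd_feq l ω).deriv,
    (hd_fe1 l ω).deriv, (hd_fe2 l ω).deriv]
  have e1 : (I * l - 2) * (ω : ℂ) = (I * l - 1) * ω - ω := by ring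
  have e2 : I * l * (ω : ℂ) = (I * l - 1) * ω + ω := by ring
  simp only [fe1, fe2, feq, e1, e2, Complex.cos_sub, Complex.sin_sub,
    Complex.cos_add, Complex.sin_add, ← Complex.ofReal_cos, ← Complex.ofReal_sin]
  refine ⟨by ring, by ring, by ring⟩
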